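/- Let H be a real Hilbert space, C ⊆ H a nonempty closed convex set, and f : H → ℝ differentiable with L-Lipschitz gradient (L > 0), bounded below on C by f*. Fix 0 < μ ≤ 1/L and x₀ ∈ C, and define the projected gradient iterates x_{t+1} = proj_C(x_t − μ·∇f(x_t)) with gradient mapping 𝒫(μ, x_t) = (x_t − x_{t+1})/μ. Then for every T ≥ 1, min_{0 ≤ t < T} ‖𝒫(μ, x_t)‖² ≤ 2·(f(x₀) − f*)/(μ·T). -/

import Mathlib

open InnerProductSpace intervalIntegral

lemma descent_lemma
    {H : Type*} [NormedAddCommGroup H] [InnerProductSpace ℝ H] [CompleteSpace H]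
    (f : H → ℝ) (L : ℝ) (hL : 0 ≤ L)
    (hdiff : Differentiable ℝ f)
    (hLip : ∀ u v : H, ‖gradient f u - gradient f v‖ ≤ L * ‖u - v‖)
    (x y : H) :
    f y ≤ f x + ⟪gradient f x, y - x⟫_ℝ + L / 2 * ‖y - x‖ ^ 2 := by
  set d := y - x with hd
  have hgc : Continuous (gradient f) := by
    have : LipschitzWith (Real.toNNReal L) (gradient f) := by
      apply LipschitzWith.of_dist_le_mul
      intro u v
      simpa [dist_eq_norm, Real.coe_toNNReal L hL] using hLip u v
    exact this.continuous
  have hderiv : ∀ t : ℝ, HasDerivAt (fun s : ℝ => f (x + s • d))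
      ⟪gradient f (x + t • d), d⟫_ℝ t := by
    intro t
    have h1 : HasGradientAt f (gradient f (x + t • d)) (x + t • d) :=
      (hdiff (x + t • d)).hasGradientAt
    have h2 : HasDerivAt (fun s : ℝ => x + s • d) d t := by
      simpa using ((hasDerivAt_id t).smul_const d).const_add x
    have := h1.hasFDerivAt.comp_hasDerivAt t h2
    exact this
  have hcont : Continuous (fun t : ℝ => ⟪gradient f (x + t • d), d⟫_ℝ) := by
    exact (hgc.comp (by continuity)).inner continuous_const
  have hFTC : f y - f x = ∫ t in (0:ℝ)..1, ⟪gradient f (x + t • d), d⟫_ℝ := by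
    have := intervalIntegral.integral_eq_sub_of_hasDerivAt (fun t _ => hderiv t)
      (hcont.intervalIntegrable 0 1)
    simp only [zero_smul, add_zero, one_smul] at this
    rw [this]
    simp [hd]
  have hbound : ∫ t in (0:ℝ)..1, ⟪gradient f (x + t • d), d⟫_ℝ
      ≤ ⟪gradient f x, d⟫_ℝ + L / 2 * ‖d‖ ^ 2 := by
    have h1 : ∀ t ∈ Set.Icc (0:ℝ) 1,
        ⟪gradient f (x + t • d), d⟫_ℝ ≤ ⟪gradient f x, d⟫_ℝ + L * t * ‖d‖ ^ 2 := by
      intro t ht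
      have key : ⟪gradient f (x + t • d) - gradient f x, d⟫_ℝ ≤ L * t * ‖d‖ ^ 2 := by
        have h4 : ‖gradient f (x + t • d) - gradient f x‖ ≤ L * t * ‖d‖ := by
          have := hLip (x + t • d) x
          rwa [add_sub_cancel_left, norm_smul, Real.norm_eq_abs, abs_of_nonneg ht.1,
            ← mul_assoc] at this
        calc ⟪gradient f (x + t • d) - gradient f x, d⟫_ℝ
            ≤ ‖gradient f (x + t • d) - gradient f x‖ * ‖d‖ := real_inner_le_norm _ _
          _ ≤ L * t * ‖d‖ * ‖d‖ := mul_le_mul_of_nonneg_right h4 (norm_nonneg d)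
          _ = L * t * ‖d‖ ^ 2 := by ring
      have he := inner_sub_left (𝕜 := ℝ) (gradient f (x + t • d)) (gradient f x) d
      linarith [he.le, he.ge]
    have h2 : (∫ t in (0:ℝ)..1, ⟪gradient f (x + t • d), d⟫_ℝ)
        ≤ ∫ t in (0:ℝ)..1, (⟪gradient f x, d⟫_ℝ + L * t * ‖d‖ ^ 2) := by
      apply intervalIntegral.integral_mono_on (by norm_num)
        (hcont.intervalIntegrable 0 1)
        ((by continuity : Continuous fun t : ℝ => ⟪gradient f x, d⟫_ℝ + L * t * ‖d‖ ^ 2).intervalIntegrable 0 1)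
      exact h1
    have h3 : (∫ t in (0:ℝ)..1, (⟪gradient f x, d⟫_ℝ + L * t * ‖d‖ ^ 2))
        = ⟪gradient f x, d⟫_ℝ + L / 2 * ‖d‖ ^ 2 := by
      have he : (fun t : ℝ => ⟪gradient f x, d⟫_ℝ + L * t * ‖d‖ ^ 2)
          = fun t : ℝ => ⟪gradient f x, d⟫_ℝ + (L * ‖d‖ ^ 2) * t := by
        funext t; ring
      rw [he, intervalIntegral.integral_add intervalIntegrable_const
        ((by continuity : Continuous fun t : ℝ => (L * ‖d‖ ^ 2) * t).intervalIntegrable 0 1),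
        intervalIntegral.integral_const, intervalIntegral.integral_const_mul,
        integral_id]
      simp
      ring
    linarith
  linarith [hFTC ▸ hbound]

/-- `O(1/√T)` convergence rate of the gradient mapping for projected gradient descent on an
`L`-smooth function bounded below on a nonempty closed convex set. -/
theorem projected_gradient_mapping_rate
    {H : Type*} [NormedAddCommGroup H] [InnerProductSpace ℝ H] [CompleteSpace H]
    (C : Set H) (hCclosed : IsClosed C) (hCconv : Convex ℝ C) (hCne : C.Nonempty)
    (f : H → ℝ) (L : ℝ) (hL : 0 < L)
    (hdiff : Differentiable ℝ f)
    (hLip : ∀ u v : H, ‖gradient f u - gradient f v‖ ≤ L * ‖u - v‖)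
    (fstar : ℝ) (hbdd : ∀ y ∈ C, fstar ≤ f y)
    (μ : ℝ) (hμ : 0 < μ) (hμL : μ ≤ 1 / L)
    (x : ℕ → H) (hx0 : x 0 ∈ C)
    (hmem : ∀ t : ℕ, x (t + 1) ∈ C)
    (hproj : ∀ t : ℕ, ∀ y ∈ C,
      ‖x t - μ • gradient f (x t) - x (t + 1)‖ ≤ ‖x t - μ • gradient f (x t) - y‖) :
    ∀ T : ℕ, 1 ≤ T →
      ∃ t < T, ‖μ⁻¹ • (x t - x (t + 1))‖ ^ 2 ≤ 2 * (f (x 0) - fstar) / (μ * T) := by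
  have hC : ∀ t : ℕ, x t ∈ C := by
    intro t; cases t with
    | zero => exact hx0
    | succ n => exact hmem n
  have hLμ : L * μ ≤ 1 := by
    rw [le_div_iff₀ hL] at hμL; linarith [hμL]
  have step : ∀ t : ℕ, ‖x t - x (t + 1)‖ ^ 2 ≤ 2 * μ * (f (x t) - f (x (t + 1))) := by
    intro t
    set u := x t with hu
    set v := x (t + 1) with hv
    set g := gradient f u with hg
    haveI : Nonempty ↥C := hCne.to_subtype
    have hinf : ‖(u - μ • g) - v‖ = ⨅ w : C, ‖(u - μ • g) - w‖ := by
      apply le_antisymm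
      · exact le_ciInf fun w => hproj t w w.2
      · have hbb : BddBelow (Set.range fun w : C => ‖(u - μ • g) - (w : H)‖) := by
          refine ⟨0, ?_⟩
          rintro r ⟨w, rfl⟩
          exact norm_nonneg _
        exact ciInf_le hbb ⟨v, hmem t⟩
    have hVI : ⟪(u - μ • g) - v, u - v⟫_ℝ ≤ 0 := by
      have h := (norm_eq_iInf_iff_real_inner_le_zero hCconv (hmem t)).mp hinf u (hC t)
      exact h
    have hexp : ⟪(u - μ • g) - v, u - v⟫_ℝ
        = ‖u - v‖ ^ 2 - μ * ⟪g, u - v⟫_ℝ := by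
      have : (u - μ • g) - v = (u - v) - μ • g := by abel
      rw [this, inner_sub_left, real_inner_smul_left, real_inner_self_eq_norm_sq]
    have hVI' : ‖u - v‖ ^ 2 ≤ μ * ⟪g, u - v⟫_ℝ := by
      rw [hexp] at hVI; linarith
    have hdec := descent_lemma f L hL.le hdiff hLip u v
    have hswap : ⟪g, v - u⟫_ℝ = -⟪g, u - v⟫_ℝ := by
      rw [← inner_neg_right, neg_sub]
    have hnorm : ‖v - u‖ = ‖u - v‖ := norm_sub_rev v u
    rw [hswap, hnorm] at hdec
    have hn2 : (0:ℝ) ≤ ‖u - v‖ ^ 2 := sq_nonneg _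
    nlinarith [hdec, hVI', hμ, hLμ, mul_le_mul_of_nonneg_right hLμ hn2]
  have hsum : ∀ T : ℕ, ∑ t ∈ Finset.range T, ‖x t - x (t + 1)‖ ^ 2
      ≤ 2 * μ * (f (x 0) - f (x T)) := by
    intro T
    induction T with
    | zero => simp
    | succ n ih =>
      rw [Finset.sum_range_succ]
      have := step n
      linarith
  intro T hT
  obtain ⟨t0, ht0, hmin⟩ := Finset.exists_min_image (Finset.range T)
    (fun t => ‖x t - x (t + 1)‖ ^ 2) ⟨0, Finset.mem_range.mpr hT⟩
  refine ⟨t0, Finset.mem_range.mp ht0, ?_⟩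
  set m := ‖x t0 - x (t0 + 1)‖ ^ 2 with hm
  have hcard : (T : ℝ) * m ≤ ∑ t ∈ Finset.range T, ‖x t - x (t + 1)‖ ^ 2 := by
    have := Finset.card_nsmul_le_sum (Finset.range T)
      (fun t => ‖x t - x (t + 1)‖ ^ 2) m (fun i hi => hmin i hi)
    simpa [nsmul_eq_mul] using this
  have hΔ : fstar ≤ f (x T) := hbdd _ (hC T)
  have hTm : (T : ℝ) * m ≤ 2 * μ * (f (x 0) - fstar) := by
    have h := hsum T
    nlinarith [hμ.le, hΔ]
  have hT1 : (1:ℝ) ≤ (T:ℝ) := by exact_mod_cast hT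
  have hTpos : (0:ℝ) < T := by linarith
  have hlhs : ‖μ⁻¹ • (x t0 - x (t0 + 1))‖ ^ 2 = μ⁻¹ ^ 2 * m := by
    rw [norm_smul, mul_pow, hm, Real.norm_eq_abs, sq_abs]
  rw [hlhs, le_div_iff₀ (by positivity)]
  calc μ⁻¹ ^ 2 * m * (μ * T) = μ⁻¹ * ((T : ℝ) * m) := by
        field_simp
    _ ≤ μ⁻¹ * (2 * μ * (f (x 0) - fstar)) :=
        mul_le_mul_of_nonneg_left hTm (inv_pos.mpr hμ).le
    _ = 2 * (f (x 0) - fstar) := by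
        field_simp
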